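/- There is a surjective group homomorphism from SL₂(ℤ) onto the free product (ℤ/2ℤ) * (ℤ/3ℤ) whose kernel is the central subgroup {I, −I} of order 2. Equivalently, the quotient SL₂(ℤ)/{±I} is isomorphic to the free product of a cyclic group of order 2 and a cyclic group of order 3. -/

import Mathlib

open Matrix ModularGroup Matrix.SpecialLinearGroup Pointwise Cardinal

namespace SL2Coprod

local notation "SL2" => Matrix.SpecialLinearGroup (Fin 2) ℤ

instance : Fact (Even (Fintype.card (Fin 2))) := ⟨by simp⟩

lemma S_sq : (S : SL2) * S = -1 :=
  Subtype.ext (by rw [Matrix.SpecialLinearGroup.coe_mul, S_mul_S_eq]; simp)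

lemma T_zpow_mat (n : ℤ) : ((T^n : SL2) : Matrix (Fin 2) (Fin 2) ℤ) = !![1, n; 0, 1] :=
  coe_T_zpow n

/-- `T * S` has matrix `!![1,-1;1,0]`. -/
lemma TS_mat : ((T * S : SL2) : Matrix (Fin 2) (Fin 2) ℤ) = !![1,-1;1,0] := by
  rw [Matrix.SpecialLinearGroup.coe_mul, coe_T, coe_S]
  norm_num [Matrix.mul_fin_two]

lemma TS_sq_mat : (((T*S : SL2)^2 : SL2) : Matrix (Fin 2) (Fin 2) ℤ) = !![0,-1;1,-1] := by
  rw [pow_two]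
  simp only [Matrix.SpecialLinearGroup.coe_mul, coe_T, coe_S]
  norm_num [Matrix.mul_fin_two]

lemma TS_cube : (T*S : SL2)^3 = -1 := by
  apply Subtype.ext
  rw [pow_succ, pow_succ, pow_one]
  simp only [Matrix.SpecialLinearGroup.coe_mul, coe_T, coe_S, coe_neg, coe_one]
  norm_num [Matrix.mul_fin_two]
  ext i j; fin_cases i <;> fin_cases j <;> simp

/-- `S` and `T` generate `SL(2, ℤ)`. -/
lemma closure_ST : Subgroup.closure ({S, T} : Set SL2) = ⊤ := by
  rw [eq_top_iff]
  intro M _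
  have hS : (S:SL2) ∈ Subgroup.closure ({S, T} : Set SL2) := Subgroup.subset_closure (by simp)
  have hT : (T:SL2) ∈ Subgroup.closure ({S, T} : Set SL2) := Subgroup.subset_closure (by simp)
  have key : ∀ n : ℕ, ∀ M : SL2, ((M : Matrix (Fin 2) (Fin 2) ℤ) 1 0).natAbs ≤ n →
      M ∈ Subgroup.closure ({S, T} : Set SL2) := by
    intro n
    induction n with
    | zero =>
      intro M hM
      have hc : (M : Matrix (Fin 2) (Fin 2) ℤ) 1 0 = 0 := by omega
      have hdet := M.2
      rw [Matrix.det_fin_two, hc, mul_zero, sub_zero] at hdet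
      have hMeta := Matrix.eta_fin_two (M : Matrix (Fin 2) (Fin 2) ℤ)
      rcases Int.mul_eq_one_iff_eq_one_or_neg_one.mp hdet with ⟨h1, h2⟩|⟨h1, h2⟩
      · have : M = T ^ ((M : Matrix (Fin 2) (Fin 2) ℤ) 0 1) := by
          apply Subtype.ext
          rw [T_zpow_mat]
          conv_lhs => rw [hMeta, hc, h1, h2]
        rw [this]; exact Subgroup.zpow_mem _ hT _
      · have : M = S * S * T ^ (-((M : Matrix (Fin 2) (Fin 2) ℤ) 0 1)) := by
          apply Subtype.ext
          rw [Matrix.SpecialLinearGroup.coe_mul, Matrix.SpecialLinearGroup.coe_mul,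
            S_mul_S_eq, T_zpow_mat]
          conv_lhs => rw [hMeta, hc, h1, h2]
          ext i j; fin_cases i <;> fin_cases j <;> simp
        rw [this]
        exact Subgroup.mul_mem _ (Subgroup.mul_mem _ hS hS) (Subgroup.zpow_mem _ hT _)
    | succ n ih =>
      intro M hM
      by_cases hc : (M : Matrix (Fin 2) (Fin 2) ℤ) 1 0 = 0
      · exact ih M (by omega)
      · set a := (M : Matrix (Fin 2) (Fin 2) ℤ) 0 0 with ha
        set c := (M : Matrix (Fin 2) (Fin 2) ℤ) 1 0 with hcc
        set q : ℤ := -(a / c) with hq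
        have hent : ((S * (T^q * M) : SL2) : Matrix (Fin 2) (Fin 2) ℤ) 1 0 = a + q * c := by
          simp [Matrix.SpecialLinearGroup.coe_mul, coe_T_zpow, coe_S, Matrix.mul_apply,
            Matrix.vecMul, dotProduct, Fin.sum_univ_succ, ha, hcc, Matrix.vecHead, Matrix.vecTail]
        have hmod : a + q * c = a % c := by rw [hq]; rw [Int.emod_def]; ring
        have hlt : (a % c).natAbs < c.natAbs := by
          have h1 : 0 ≤ a % c := Int.emod_nonneg a hc
          have h2 : a % c < (c.natAbs : ℤ) := Int.emod_lt a hc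
          have h3 : |c| = c.natAbs := Int.abs_eq_natAbs c
          omega
        have hmem : (S * (T^q * M) : SL2) ∈ Subgroup.closure ({S, T} : Set SL2) := by
          apply ih
          rw [hent, hmod]; omega
        have : M = (T^q)⁻¹ * (S⁻¹ * (S * (T^q * M))) := by group
        rw [this]
        exact Subgroup.mul_mem _ (Subgroup.inv_mem _ (Subgroup.zpow_mem _ hT _))
          (Subgroup.mul_mem _ (Subgroup.inv_mem _ hS) hmem)
  exact key _ M le_rfl

/-! ### The Möbius action on irrational real numbers -/

abbrev Irr := {x : ℝ // Irrational x}

lemma denom_ne_zero (g : SL2) (x : Irr) :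
    ((g : Matrix (Fin 2) (Fin 2) ℤ) 1 0 : ℝ) * x.1 + ((g : Matrix (Fin 2) (Fin 2) ℤ) 1 1 : ℝ) ≠ 0 := by
  set c := (g : Matrix (Fin 2) (Fin 2) ℤ) 1 0
  set d := (g : Matrix (Fin 2) (Fin 2) ℤ) 1 1
  by_cases hc : c = 0
  · have hdet := g.2
    rw [Matrix.det_fin_two] at hdet
    have hdet' : g.val 0 0 * d - g.val 0 1 * c = 1 := hdet
    have hd : d ≠ 0 := by intro h; rw [hc, h] at hdet'; simp at hdet'
    simp [hc]
    exact_mod_cast hd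
  · intro h
    apply x.2
    refine ⟨(-d : ℚ)/(c : ℚ), ?_⟩
    have hcR : (c:ℝ) ≠ 0 := Int.cast_ne_zero.mpr hc
    push_cast
    field_simp
    linarith [h]

lemma moebius_irrational (g : SL2) (x : Irr) :
    Irrational ((((g : Matrix (Fin 2) (Fin 2) ℤ) 0 0 : ℝ) * x.1 + ((g : Matrix (Fin 2) (Fin 2) ℤ) 0 1 : ℝ)) /
      (((g : Matrix (Fin 2) (Fin 2) ℤ) 1 0 : ℝ) * x.1 + ((g : Matrix (Fin 2) (Fin 2) ℤ) 1 1 : ℝ))) := by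
  set a := (g : Matrix (Fin 2) (Fin 2) ℤ) 0 0
  set b := (g : Matrix (Fin 2) (Fin 2) ℤ) 0 1
  set c := (g : Matrix (Fin 2) (Fin 2) ℤ) 1 0
  set d := (g : Matrix (Fin 2) (Fin 2) ℤ) 1 1
  have hdet : a * d - b * c = 1 := by have := g.2; rwa [Matrix.det_fin_two] at this
  have hden := denom_ne_zero g x
  rintro ⟨q, hq⟩
  have hx := x.2
  have heq : (a:ℝ) * x.1 + b = q * ((c:ℝ) * x.1 + d) := by
    rw [hq, div_mul_cancel₀ _ (show (c:ℝ) * x.1 + d ≠ 0 from hden)]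
  by_cases hr : (a : ℚ) - q * c = 0
  · have hra : (a : ℝ) = (q:ℝ) * c := by
      have := congrArg (fun t : ℚ => (t : ℝ)) hr
      push_cast at this; linarith
    have hb : (b : ℝ) = (q:ℝ) * d := by
      rw [hra] at heq; ring_nf at heq ⊢; linarith
    have hbq : (b : ℚ) = q * d := by exact_mod_cast hb
    have haq : (a : ℚ) = q * c := by exact_mod_cast hra
    have : ((a * d - b * c : ℤ) : ℚ) = 0 := by push_cast; rw [haq, hbq]; ring
    rw [hdet] at this; simp at this
  · apply hx
    refine ⟨(q * d - b) / ((a:ℚ) - q * c), ?_⟩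
    have hrR : ((a:ℚ) - q * c : ℚ) ≠ 0 := hr
    have hcast : (((a:ℚ) - q * c : ℚ) : ℝ) = (a:ℝ) - (q:ℝ) * c := by push_cast; ring
    have hrR' : (a:ℝ) - (q:ℝ) * c ≠ 0 := by
      rw [← hcast]; exact_mod_cast hrR
    push_cast
    field_simp
    linear_combination -heq

noncomputable instance : MulAction SL2 Irr where
  smul g x := ⟨_, moebius_irrational g x⟩
  one_smul x := by
    apply Subtype.ext
    show (((1:SL2).val 0 0 : ℝ) * x.1 + ((1:SL2).val 0 1 : ℝ)) /
      (((1:SL2).val 1 0 : ℝ) * x.1 + ((1:SL2).val 1 1 : ℝ)) = x.1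
    norm_num [Matrix.SpecialLinearGroup.coe_one]
  mul_smul g h x := by
    apply Subtype.ext
    have hentry : ∀ i j, ((g*h : SL2).val i j : ℝ) =
        (g.val i 0 : ℝ) * (h.val 0 j : ℝ) + (g.val i 1 : ℝ) * (h.val 1 j : ℝ) := by
      intro i j
      have : (g*h : SL2).val i j = g.val i 0 * h.val 0 j + g.val i 1 * h.val 1 j := by
        simp [Matrix.SpecialLinearGroup.coe_mul, Matrix.mul_apply, Fin.sum_univ_succ]
      rw [this]; push_cast; ring
    have hD1 := denom_ne_zero h x
    have hD3 := denom_ne_zero (g*h) x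
    set y : Irr := ⟨_, moebius_irrational h x⟩ with hy
    have hD2 := denom_ne_zero g y
    show (((g*h : SL2).val 0 0 : ℝ) * x.1 + ((g*h : SL2).val 0 1 : ℝ)) /
      (((g*h : SL2).val 1 0 : ℝ) * x.1 + ((g*h : SL2).val 1 1 : ℝ))
      = ((g.val 0 0 : ℝ) * y.1 + (g.val 0 1 : ℝ)) / ((g.val 1 0 : ℝ) * y.1 + (g.val 1 1 : ℝ))
    have hyval : y.1 = ((h.val 0 0 : ℝ) * x.1 + (h.val 0 1 : ℝ)) /
        ((h.val 1 0 : ℝ) * x.1 + (h.val 1 1 : ℝ)) := rfl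
    simp only [hentry] at hD3 ⊢
    rw [div_eq_div_iff hD3 hD2]
    rw [hyval]
    field_simp
    ring

lemma smul_val (g : SL2) (x : Irr) :
    (g • x).1 = ((g.val 0 0 : ℝ) * x.1 + (g.val 0 1 : ℝ)) /
      ((g.val 1 0 : ℝ) * x.1 + (g.val 1 1 : ℝ)) := rfl

lemma neg_one_smul_irr (x : Irr) : ((-1 : SL2) • x) = x := by
  apply Subtype.ext
  rw [smul_val]
  have h : ((-1 : SL2) : Matrix (Fin 2) (Fin 2) ℤ) = -1 := by
    rw [coe_neg]; simp
  rw [h]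
  norm_num

/-! ### The quotient `Q = SL(2,ℤ)/{±1}` -/

lemma neg_one_central (g : SL2) : Commute (-1 : SL2) g := by
  simp [Commute, SemiconjBy]

instance Hnormal : (Subgroup.zpowers (-1 : SL2)).Normal := by
  constructor
  rintro x ⟨k, rfl⟩ g
  refine ⟨k, ?_⟩
  have := ((neg_one_central g).zpow_left k).eq
  rw [← this]
  group

abbrev Q := SL2 ⧸ Subgroup.zpowers (-1 : SL2)

noncomputable abbrev π : SL2 →* Q := QuotientGroup.mk' _

lemma mem_zpowers_iff (M : SL2) :
    M ∈ Subgroup.zpowers (-1 : SL2) ↔ M = 1 ∨ M = -1 := by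
  constructor
  · rintro ⟨k, rfl⟩
    have h2 : (-1 : SL2) * (-1) = 1 := by simp
    rcases Int.even_or_odd k with ⟨m, rfl⟩ | ⟨m, rfl⟩
    · left
      show (-1 : SL2) ^ (m + m) = 1
      rw [_root_.zpow_add, ← (Commute.refl (-1 : SL2)).mul_zpow, h2, _root_.one_zpow]
    · right
      show (-1 : SL2) ^ (2 * m + 1) = -1
      rw [_root_.zpow_add, _root_.zpow_one, two_mul, _root_.zpow_add,
        ← (Commute.refl (-1 : SL2)).mul_zpow, h2, _root_.one_zpow, one_mul]
  · rintro (rfl|rfl)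
    · exact ⟨0, by simp⟩
    · exact ⟨1, by simp⟩

lemma pi_neg_one : π (-1) = 1 :=
  (QuotientGroup.eq_one_iff _).mpr ⟨1, by simp⟩

lemma pi_S_sq : (π S)^2 = 1 := by
  rw [← map_pow, pow_two, S_sq, pi_neg_one]

lemma pi_TS_cube : (π (T*S))^3 = 1 := by
  rw [← map_pow, TS_cube, pi_neg_one]

/-! ### The homomorphisms from `ℤ/2` and `ℤ/3` -/

noncomputable def f2 : Multiplicative (ZMod 2) →* Q where
  toFun x := (π S) ^ (Multiplicative.toAdd x).val
  map_one' := by simp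
  map_mul' x y := by
    show (π S) ^ (Multiplicative.toAdd x + Multiplicative.toAdd y).val = _
    rw [ZMod.val_add, ← pow_eq_pow_mod _ pi_S_sq, pow_add]

noncomputable def f3 : Multiplicative (ZMod 3) →* Q where
  toFun x := (π (T*S)) ^ (Multiplicative.toAdd x).val
  map_one' := by simp
  map_mul' x y := by
    show (π (T*S)) ^ (Multiplicative.toAdd x + Multiplicative.toAdd y).val = _
    rw [ZMod.val_add, ← pow_eq_pow_mod _ pi_TS_cube, pow_add]

lemma f2_gen : f2 (Multiplicative.ofAdd 1) = π S := by
  show (π S) ^ (1 : ZMod 2).val = π S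
  rw [ZMod.val_one, pow_one]

lemma f3_gen : f3 (Multiplicative.ofAdd 1) = π (T*S) := by
  show (π (T*S)) ^ (1 : ZMod 3).val = π (T*S)
  rw [ZMod.val_one, pow_one]

noncomputable def ψ : Monoid.Coprod (Multiplicative (ZMod 2)) (Multiplicative (ZMod 3)) →* Q :=
  Monoid.Coprod.lift f2 f3

lemma ψ_surjective : Function.Surjective ψ := by
  rw [← MonoidHom.range_eq_top]
  rw [eq_top_iff]
  have hπ : Function.Surjective (π : SL2 →* Q) := QuotientGroup.mk'_surjective _
  have h1 : (⊤ : Subgroup Q) = Subgroup.map π ⊤ := (Subgroup.map_top_of_surjective _ hπ).symm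
  rw [h1, ← closure_ST, MonoidHom.map_closure]
  rw [Subgroup.closure_le]
  rintro q ⟨M, hM, rfl⟩
  rcases hM with rfl | rfl
  · exact ⟨Monoid.Coprod.inl (Multiplicative.ofAdd 1), by
      rw [ψ, Monoid.Coprod.lift_apply_inl, f2_gen]⟩
  · refine ⟨Monoid.Coprod.inr (Multiplicative.ofAdd 1) * (Monoid.Coprod.inl (Multiplicative.ofAdd 1))⁻¹, ?_⟩
    rw [_root_.map_mul, _root_.map_inv, ψ, Monoid.Coprod.lift_apply_inl,
      Monoid.Coprod.lift_apply_inr, f2_gen, f3_gen, _root_.map_mul]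
    group

/-! ### Descending the action to `Q` and ping-pong -/

noncomputable def ρ : Q →* Equiv.Perm Irr :=
  QuotientGroup.lift _ (MulAction.toPermHom SL2 Irr) (by
    intro x hx
    rcases (mem_zpowers_iff x).mp hx with rfl | rfl
    · exact map_one (MulAction.toPermHom SL2 Irr)
    · apply Equiv.ext
      intro y
      exact neg_one_smul_irr y)

noncomputable instance : MulAction Q Irr := MulAction.compHom Irr ρ

lemma pi_smul (g : SL2) (x : Irr) : (π g) • x = g • x := rfl

lemma S_smul_neg (x : Irr) (hx : 0 < x.1) : ((S : SL2) • x).1 < 0 := by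
  have h := smul_val S x
  rw [show ((S : SL2) : Matrix (Fin 2) (Fin 2) ℤ) = !![0,-1;1,0] from coe_S] at h
  simp at h
  rw [h]
  apply div_neg_of_neg_of_pos <;> norm_num [hx]

lemma TS_smul_pos (x : Irr) (hx : x.1 < 0) : 0 < ((T * S : SL2) • x).1 := by
  have h := smul_val (T*S) x
  rw [TS_mat] at h
  simp at h
  rw [h]
  apply div_pos_of_neg_of_neg <;> [linarith; simpa using hx]

lemma TS2_smul_pos (x : Irr) (hx : x.1 < 0) : 0 < (((T * S : SL2)^2) • x).1 := by
  have h := smul_val ((T*S)^2) x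
  rw [TS_sq_mat] at h
  simp at h
  rw [h]
  apply div_pos_of_neg_of_neg <;> [norm_num; linarith]

/-! ### The `Bool`-indexed family and the bridge to `Monoid.Coprod` -/

def Hfam : Bool → Type
  | true => Multiplicative (ZMod 2)
  | false => Multiplicative (ZMod 3)

instance Hfam_group : ∀ b, Group (Hfam b)
  | true => inferInstanceAs (Group (Multiplicative (ZMod 2)))
  | false => inferInstanceAs (Group (Multiplicative (ZMod 3)))

noncomputable def fι : ∀ b, Hfam b →* Q
  | true => f2
  | false => f3

def Xb : Bool → Set Irr := fun b => cond b {x | x.1 < 0} {x | 0 < x.1}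

lemma hpp_true (h : Multiplicative (ZMod 2)) (hne : h ≠ 1) :
    f2 h • Xb false ⊆ Xb true := by
  have hval : (Multiplicative.toAdd h).val = 1 := by
    have h1 : (Multiplicative.toAdd h).val < 2 := ZMod.val_lt _
    have h2 : (Multiplicative.toAdd h).val ≠ 0 := by
      intro h0
      apply hne
      have : (Multiplicative.toAdd h) = 0 := by rwa [ZMod.val_eq_zero] at h0
      simpa using this
    omega
  have hf2 : f2 h = π S := by
    show (π S) ^ (Multiplicative.toAdd h).val = _
    rw [hval, pow_one]
  rintro z ⟨x, hx, rfl⟩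
  have hxpos : 0 < x.1 := hx
  show (f2 h • x).1 < 0
  rw [hf2, pi_smul]
  exact S_smul_neg x hxpos

lemma hpp_false (h : Multiplicative (ZMod 3)) (hne : h ≠ 1) :
    f3 h • Xb true ⊆ Xb false := by
  have hval : (Multiplicative.toAdd h).val = 1 ∨ (Multiplicative.toAdd h).val = 2 := by
    have h1 : (Multiplicative.toAdd h).val < 3 := ZMod.val_lt _
    have h2 : (Multiplicative.toAdd h).val ≠ 0 := by
      intro h0
      apply hne
      have : (Multiplicative.toAdd h) = 0 := by rwa [ZMod.val_eq_zero] at h0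
      simpa using this
    omega
  have hf3 : f3 h = π ((T*S) ^ (Multiplicative.toAdd h).val) := by
    show (π (T*S)) ^ (Multiplicative.toAdd h).val = _
    rw [map_pow]
  rintro z ⟨x, hx, rfl⟩
  have hxneg : x.1 < 0 := hx
  show (0:ℝ) < (f3 h • x).1
  rw [hf3, pi_smul]
  rcases hval with hv | hv <;> rw [hv]
  · rw [pow_one]; exact TS_smul_pos x hxneg
  · exact TS2_smul_pos x hxneg

lemma lift_fι_injective : Function.Injective (Monoid.CoprodI.lift fι) := by
  apply Monoid.CoprodI.lift_injective_of_ping_pong fι _ Xb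
  · -- nonempty
    intro b
    cases b
    · exact ⟨⟨Real.sqrt 2, irrational_sqrt_two⟩, by
        simpa [Xb] using Real.sqrt_pos.mpr (by norm_num)⟩
    · exact ⟨⟨-Real.sqrt 2, irrational_sqrt_two.neg⟩, by
        simpa [Xb] using Real.sqrt_pos.mpr (by norm_num)⟩
  · -- disjoint
    intro i j hij
    cases i <;> cases j
    · exact absurd rfl hij
    · show Disjoint (Xb false) (Xb true)
      rw [Set.disjoint_left]
      intro x hx hx'
      have h1 : (0:ℝ) < x.1 := hx
      have h2 : x.1 < 0 := hx'
      linarith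
    · show Disjoint (Xb true) (Xb false)
      rw [Set.disjoint_left]
      intro x hx hx'
      have h1 : x.1 < 0 := hx
      have h2 : (0:ℝ) < x.1 := hx'
      linarith
    · exact absurd rfl hij
  · -- ping pong condition
    intro i j hij
    cases i
    · cases j
      · exact absurd rfl hij
      · exact fun h hne => hpp_false h hne
    · cases j
      · exact fun h hne => hpp_true h hne
      · exact absurd rfl hij
  · -- cardinality
    right
    refine ⟨false, ?_⟩
    have h0 : Cardinal.mk (Hfam false) = Cardinal.mk (Multiplicative (ZMod 3)) := rfl
    rw [h0, Cardinal.mk_fintype, Fintype.card_congr Multiplicative.toAdd, ZMod.card]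
    norm_num

noncomputable def toHom : Monoid.CoprodI Hfam →*
    Monoid.Coprod (Multiplicative (ZMod 2)) (Multiplicative (ZMod 3)) :=
  Monoid.CoprodI.lift (fun b => match b with
    | true => Monoid.Coprod.inl
    | false => Monoid.Coprod.inr)

noncomputable def invHom : Monoid.Coprod (Multiplicative (ZMod 2)) (Multiplicative (ZMod 3)) →*
    Monoid.CoprodI Hfam :=
  Monoid.Coprod.lift
    (Monoid.CoprodI.of (M := Hfam) (i := true) :
      Multiplicative (ZMod 2) →* Monoid.CoprodI Hfam)
    (Monoid.CoprodI.of (M := Hfam) (i := false) :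
      Multiplicative (ZMod 3) →* Monoid.CoprodI Hfam)

lemma toHom_invHom : toHom.comp invHom = MonoidHom.id _ := by
  apply Monoid.Coprod.hom_ext
  · apply MonoidHom.ext; intro x
    show toHom (invHom (Monoid.Coprod.inl x)) = Monoid.Coprod.inl x
    show toHom (Monoid.CoprodI.of (M := Hfam) (i := true) x) = _
    exact Monoid.CoprodI.lift_of ..
  · apply MonoidHom.ext; intro x
    show toHom (invHom (Monoid.Coprod.inr x)) = Monoid.Coprod.inr x
    show toHom (Monoid.CoprodI.of (M := Hfam) (i := false) x) = _
    exact Monoid.CoprodI.lift_of ..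

lemma toHom_surjective : Function.Surjective toHom := by
  intro x
  exact ⟨invHom x, by rw [← MonoidHom.comp_apply, toHom_invHom, MonoidHom.id_apply]⟩

lemma ψ_toHom : ψ.comp toHom = Monoid.CoprodI.lift fι := by
  apply Monoid.CoprodI.ext_hom
  intro b
  cases b
  · ext x
    show ψ (toHom (Monoid.CoprodI.of x)) = Monoid.CoprodI.lift fι (Monoid.CoprodI.of x)
    rw [toHom]
    erw [Monoid.CoprodI.lift_of, Monoid.CoprodI.lift_of]
    show ψ (Monoid.Coprod.inr x) = f3 x
    rw [ψ]; exact Monoid.Coprod.lift_apply_inr ..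
  · ext x
    show ψ (toHom (Monoid.CoprodI.of x)) = Monoid.CoprodI.lift fι (Monoid.CoprodI.of x)
    rw [toHom]
    erw [Monoid.CoprodI.lift_of, Monoid.CoprodI.lift_of]
    show ψ (Monoid.Coprod.inl x) = f2 x
    rw [ψ]; exact Monoid.Coprod.lift_apply_inl ..

lemma ψ_injective : Function.Injective ψ := by
  intro x y hxy
  obtain ⟨x', rfl⟩ := toHom_surjective x
  obtain ⟨y', rfl⟩ := toHom_surjective y
  have : (ψ.comp toHom) x' = (ψ.comp toHom) y' := hxy
  rw [ψ_toHom] at this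
  rw [lift_fι_injective this]

/-! ### Final assembly -/

noncomputable def e : Monoid.Coprod (Multiplicative (ZMod 2)) (Multiplicative (ZMod 3)) ≃* Q :=
  MulEquiv.ofBijective ψ ⟨ψ_injective, ψ_surjective⟩

noncomputable def φ₀ : SL2 →* Monoid.Coprod (Multiplicative (ZMod 2)) (Multiplicative (ZMod 3)) :=
  e.symm.toMonoidHom.comp π

lemma φ₀_surjective : Function.Surjective φ₀ :=
  e.symm.surjective.comp (QuotientGroup.mk'_surjective _)

lemma coe_neg_one : ((-1 : SL2) : Matrix (Fin 2) (Fin 2) ℤ) = -1 := by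
  rw [coe_neg]; simp

lemma φ₀_ker (M : SL2) : M ∈ φ₀.ker ↔
    ((M : Matrix (Fin 2) (Fin 2) ℤ) = 1 ∨ (M : Matrix (Fin 2) (Fin 2) ℤ) = -1) := by
  rw [MonoidHom.mem_ker]
  have h1 : φ₀ M = e.symm (π M) := rfl
  rw [h1, MulEquiv.map_eq_one_iff]
  have h2 : π M = 1 ↔ M ∈ Subgroup.zpowers (-1 : SL2) := QuotientGroup.eq_one_iff M
  rw [h2, mem_zpowers_iff]
  constructor
  · rintro (rfl | rfl)
    · left; exact coe_one
    · right; exact coe_neg_one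
  · rintro (h | h)
    · left; exact Subtype.ext (by rw [h]; exact coe_one.symm)
    · right; exact Subtype.ext (by rw [h, coe_neg_one])

end SL2Coprod

/-- There is a surjective homomorphism `SL₂(ℤ) → (ℤ/2) * (ℤ/3)` (free product)
whose kernel is the central subgroup `{I, -I}`. -/
theorem statement_10 :
    ∃ φ : Matrix.SpecialLinearGroup (Fin 2) ℤ →*
        Monoid.Coprod (Multiplicative (ZMod 2)) (Multiplicative (ZMod 3)),
      Function.Surjective φ ∧
        ∀ M : Matrix.SpecialLinearGroup (Fin 2) ℤ,
          M ∈ φ.ker ↔ ((M : Matrix (Fin 2) (Fin 2) ℤ) = 1 ∨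
            (M : Matrix (Fin 2) (Fin 2) ℤ) = -1) :=
  ⟨SL2Coprod.φ₀, SL2Coprod.φ₀_surjective, SL2Coprod.φ₀_ker⟩
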